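/- Let G and G' be achievement positional games on disjoint vertex sets. If o(G)=L and o(G')=R^-, then Left has a winning strategy on G∪G' as first player, i.e. o(G∪G')∈{L, L^-, N}. -/

import Mathlib

namespace APG

/-- The two players: Left and Right. -/
inductive Player : Type
  | L : Player
  | R : Player
deriving DecidableEq, Repr

/-- The opponent of a player. -/
def Player.other : Player → Player
  | .L => .R
  | .R => .L

/-- An achievement positional game: a finite vertex set together with the set of
blue edges (Left's winning sets) and the set of red edges (Right's winning sets). -/
structure Game : Type where
  V : Finset ℕ
  EL : Finset (Finset ℕ)
  ER : Finset (Finset ℕ)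

/-- The edges are nonempty subsets of the vertex set. -/
def WellFormed (G : Game) : Prop :=
  (∀ e ∈ G.EL, e ⊆ G.V ∧ e.Nonempty) ∧ (∀ e ∈ G.ER, e ⊆ G.V ∧ e.Nonempty)

/-- The winning sets of a given player. -/
def Game.edges (G : Game) : Player → Finset (Finset ℕ)
  | .L => G.EL
  | .R => G.ER

/-- The player who makes the `i`-th move (0-indexed) when `s` moves first. -/
def mover (s : Player) (i : ℕ) : Player := if i % 2 = 0 then s else s.other

/-- The set of vertices picked by player `p` along the history `h`
(the chronological list of the moves played so far), when `s` moved first. -/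
def picked (s p : Player) (h : List ℕ) : Finset ℕ :=
  ((Finset.range h.length).filter fun i => mover s i = p).image fun i => h.getD i 0

/-- The set `S` of picked vertices fills some edge of `E`. -/
def fills (E : Finset (Finset ℕ)) (S : Finset ℕ) : Prop := ∃ e ∈ E, e ⊆ S

/-- The game is over: some player has picked all the vertices of one of their edges. -/
def ended (G : Game) (s : Player) (h : List ℕ) : Prop :=
  fills G.EL (picked s .L h) ∨ fills G.ER (picked s .R h)

/-- `h` is a legal history: no vertex is picked twice, every picked vertex belongs to
the board, and no move is made after the game has ended. -/
def ValidHist (G : Game) (s : Player) (h : List ℕ) : Prop :=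
  h.Nodup ∧ (∀ x ∈ h, x ∈ G.V) ∧ ∀ k, k < h.length → ¬ ended G s (h.take k)

/-- A strategy: a map assigning to each position (history) a vertex to pick. -/
abbrev Strategy := List ℕ → ℕ

/-- Along `h`, every move of player `p` agrees with the strategy `σ`. -/
def Follows (s p : Player) (σ : Strategy) (h : List ℕ) : Prop :=
  ∀ k, k < h.length → mover s k = p → h.getD k 0 = σ (h.take k)

/-- A finished play: either the game has ended or all vertices have been picked. -/
def Complete (G : Game) (s : Player) (h : List ℕ) : Prop :=
  ended G s h ∨ h.length = G.V.card

/-- The strategy `σ` of player `p` always suggests a legal move (an unpicked vertex)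
whenever the game is not over and it is `p`'s turn. -/
def Legal (G : Game) (s p : Player) (σ : Strategy) : Prop :=
  ∀ h, ValidHist G s h → Follows s p σ h → ¬ ended G s h → h.length < G.V.card →
    mover s h.length = p → σ h ∈ G.V ∧ σ h ∉ h

/-- Player `p` has a winning strategy on `G` when `s` moves first: following it,
every finished play ends with `p` having filled one of their edges (and, the game
having ended right there, the opponent has not filled an edge first). -/
def WinsAs (G : Game) (s p : Player) : Prop :=
  ∃ σ : Strategy, Legal G s p σ ∧
    ∀ h, ValidHist G s h → Follows s p σ h → Complete G s h →
      fills (G.edges p) (picked s p h)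

/-- Player `p` has a non-losing strategy on `G` when `s` moves first: following it,
the opponent never fills one of their edges. -/
def NonLosingAs (G : Game) (s p : Player) : Prop :=
  ∃ σ : Strategy, Legal G s p σ ∧
    ∀ h, ValidHist G s h → Follows s p σ h → Complete G s h →
      ¬ fills (G.edges p.other) (picked s p.other h)

/-- The possible results of the game, for a fixed starting player. -/
inductive Result : Type
  | Lwin : Result
  | draw : Result
  | Rwin : Result
deriving DecidableEq, Repr

/-- The result of `G` with optimal play, when `s` moves first, is `r`:
a win for a player means that player has a winning strategy, a draw means
both players have non-losing strategies. -/
def resultIs (G : Game) (s : Player) : Result → Prop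
  | .Lwin => WinsAs G s .L
  | .Rwin => WinsAs G s .R
  | .draw => NonLosingAs G s .L ∧ NonLosingAs G s .R

/-- An outcome: the pair of results with optimal play
(when Left starts, when Right starts). -/
abbrev Outcome := Result × Result

/-- `G` has outcome `o`. -/
def hasOutcome (G : Game) (o : Outcome) : Prop :=
  resultIs G .L o.1 ∧ resultIs G .R o.2

/-- Numerical value of a result, from Left's point of view:
Right wins < draw < Left wins. -/
def Result.val : Result → ℕ
  | .Rwin => 0
  | .draw => 1
  | .Lwin => 2

/-- The partial order `≤_L` on outcomes, comparing both components simultaneously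
from Left's point of view. -/
def outLE (o o' : Outcome) : Prop := o.1.val ≤ o'.1.val ∧ o.2.val ≤ o'.2.val

def oL : Outcome := (.Lwin, .Lwin)
def oLminus : Outcome := (.Lwin, .draw)
def oN : Outcome := (.Lwin, .Rwin)
def oD : Outcome := (.draw, .draw)
def oRminus : Outcome := (.draw, .Rwin)
def oR : Outcome := (.Rwin, .Rwin)

/-- The updated game `G_u` after Left has picked `u`. -/
def subL (G : Game) (u : ℕ) : Game where
  V := G.V.erase u
  EL := G.EL.image fun e => e.erase u
  ER := G.ER.filter fun e => u ∉ e

/-- The updated game `G^u` after Right has picked `u`. -/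
def subR (G : Game) (u : ℕ) : Game where
  V := G.V.erase u
  EL := G.EL.filter fun e => u ∉ e
  ER := G.ER.image fun e => e.erase u

/-- The updated game `G_u^v` after Left has picked `u` and Right has picked `v`. -/
def updLR (G : Game) (u v : ℕ) : Game where
  V := (G.V.erase u).erase v
  EL := (G.EL.filter fun e => v ∉ e).image fun e => e.erase u
  ER := (G.ER.filter fun e => u ∉ e).image fun e => e.erase v

/-- The disjoint union of two games. -/
def gunion (G G' : Game) : Game where
  V := G.V ∪ G'.V
  EL := G.EL ∪ G'.EL
  ER := G.ER ∪ G'.ER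

/-! ### Basic lemmas -/

attribute [local instance] Classical.propDecidable

lemma Player.other_other (p : Player) : p.other.other = p := by cases p <;> rfl

lemma Player.cases2 (p : Player) : p = .L ∨ p = .R := by cases p <;> simp

lemma mover_zero (s : Player) : mover s 0 = s := by simp [mover]

lemma mover_succ (s : Player) (n : ℕ) : mover s (n+1) = (mover s n).other := by
  rcases Nat.even_or_odd n with h | h
  · have h0 : n % 2 = 0 := Nat.even_iff.mp h
    have h1 : (n+1) % 2 = 1 := by omega
    simp [mover, h0, h1]
  · have h0 : n % 2 = 1 := Nat.odd_iff.mp h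
    have h1 : (n+1) % 2 = 0 := by omega
    simp [mover, h0, h1, Player.other_other]

lemma picked_nil (s p : Player) : picked s p [] = ∅ := by
  simp [picked]

lemma mem_picked {s p : Player} {h : List ℕ} {a : ℕ} :
    a ∈ picked s p h ↔ ∃ i, i < h.length ∧ mover s i = p ∧ h.getD i 0 = a := by
  simp only [picked, Finset.mem_image, Finset.mem_filter, Finset.mem_range]
  constructor
  · rintro ⟨i, ⟨hi, hm⟩, ha⟩; exact ⟨i, hi, hm, ha⟩
  · rintro ⟨i, hi, hm, ha⟩; exact ⟨i, ⟨hi, hm⟩, ha⟩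

lemma getD_append_lt {h : List ℕ} {x : ℕ} {i : ℕ} (hi : i < h.length) :
    (h ++ [x]).getD i 0 = h.getD i 0 := by
  simp [List.getD, List.getElem?_append_left hi]

lemma getD_append_len (h : List ℕ) (x : ℕ) :
    (h ++ [x]).getD h.length 0 = x := by
  simp [List.getD]

lemma take_append_le {h : List ℕ} {x : ℕ} {k : ℕ} (hk : k ≤ h.length) :
    (h ++ [x]).take k = h.take k := by
  rw [List.take_append_of_le_length hk]

lemma picked_concat (s p : Player) (h : List ℕ) (x : ℕ) :
    picked s p (h ++ [x]) =
      if mover s h.length = p then insert x (picked s p h) else picked s p h := by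
  ext a
  simp only [mem_picked, List.length_append, List.length_singleton]
  by_cases hm : mover s h.length = p
  · simp only [hm, if_pos, Finset.mem_insert, mem_picked]
    constructor
    · rintro ⟨i, hi, hmi, ha⟩
      rcases Nat.lt_or_ge i h.length with h1 | h1
      · exact Or.inr ⟨i, h1, hmi, by rwa [getD_append_lt h1] at ha⟩
      · have : i = h.length := by omega
        subst this
        rw [getD_append_len] at ha; exact Or.inl ha.symm
    · rintro (rfl | ⟨i, hi, hmi, ha⟩)
      · exact ⟨h.length, by omega, hm, getD_append_len h a⟩
      · exact ⟨i, by omega, hmi, by rwa [getD_append_lt hi]⟩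
  · simp only [hm, if_neg, not_false_iff, mem_picked]
    constructor
    · rintro ⟨i, hi, hmi, ha⟩
      have h1 : i < h.length := by
        rcases Nat.lt_or_ge i h.length with h1 | h1
        · exact h1
        · have : i = h.length := by omega
          subst this; exact absurd hmi hm
      exact ⟨i, h1, hmi, by rwa [getD_append_lt h1] at ha⟩
    · rintro ⟨i, hi, hmi, ha⟩
      exact ⟨i, by omega, hmi, by rwa [getD_append_lt hi]⟩

lemma mem_of_mem_picked {s p : Player} {h : List ℕ} {a : ℕ} (ha : a ∈ picked s p h) :
    a ∈ h := by
  rcases mem_picked.mp ha with ⟨i, hi, _, ha⟩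
  subst ha
  rw [List.getD_eq_getElem _ _ hi]
  exact List.getElem_mem _

lemma picked_union (s : Player) (h : List ℕ) :
    picked s .L h ∪ picked s .R h = h.toFinset := by
  ext a
  simp only [Finset.mem_union, mem_picked, List.mem_toFinset]
  constructor
  · rintro (⟨i, hi, _, ha⟩ | ⟨i, hi, _, ha⟩) <;>
    · subst ha; rw [List.getD_eq_getElem _ _ hi]; exact List.getElem_mem _
  · intro ha
    obtain ⟨i, hi, ha⟩ := List.getElem_of_mem ha
    rcases Player.cases2 (mover s i) with hm | hm
    · exact Or.inl ⟨i, hi, hm, by rw [List.getD_eq_getElem _ _ hi]; exact ha⟩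
    · exact Or.inr ⟨i, hi, hm, by rw [List.getD_eq_getElem _ _ hi]; exact ha⟩

lemma fills_mono {E : Finset (Finset ℕ)} {S T : Finset ℕ} (hST : S ⊆ T)
    (h : fills E S) : fills E T := by
  obtain ⟨e, he, hs⟩ := h; exact ⟨e, he, hs.trans hST⟩

lemma not_fills_empty {E : Finset (Finset ℕ)} (hE : ∀ e ∈ E, e.Nonempty) :
    ¬ fills E ∅ := by
  rintro ⟨e, he, hs⟩
  obtain ⟨a, ha⟩ := hE e he
  exact absurd (hs ha) (Finset.notMem_empty a)

lemma valid_nil (G : Game) (s : Player) : ValidHist G s [] := by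
  refine ⟨List.nodup_nil, by simp, ?_⟩
  intro k hk; simp at hk

lemma follows_nil (s p : Player) (σ : Strategy) : Follows s p σ [] := by
  intro k hk; simp at hk

lemma valid_concat {G : Game} {s : Player} {h : List ℕ} {x : ℕ} :
    ValidHist G s (h ++ [x]) ↔
      ValidHist G s h ∧ x ∈ G.V ∧ x ∉ h ∧ ¬ ended G s h := by
  constructor
  · rintro ⟨hnd, hmem, hend⟩
    have hnd' := List.nodup_append.mp hnd
    refine ⟨⟨hnd'.1, fun y hy => hmem y (by simp [hy]), ?_⟩, hmem x (by simp), ?_, ?_⟩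
    · intro k hk
      have := hend k (by simp; omega)
      rwa [take_append_le (by omega)] at this
    · intro hx
      exact hnd'.2.2 x hx x (by simp) rfl
    · have := hend h.length (by simp)
      rwa [List.take_left] at this
  · rintro ⟨⟨hnd, hmem, hend⟩, hxV, hxh, hne⟩
    refine ⟨?_, ?_, ?_⟩
    · rw [List.nodup_append]
      exact ⟨hnd, List.nodup_singleton x, fun a ha b hb hab => hxh (by rw [List.mem_singleton] at hb; rw [← hb, ← hab]; exact ha)⟩
    · intro y hy
      rcases List.mem_append.mp hy with hy | hy
      · exact hmem y hy
      · simp at hy; subst hy; exact hxV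
    · intro k hk
      simp at hk
      rcases Nat.lt_or_ge k h.length with h1 | h1
      · rw [take_append_le h1.le]; exact hend k h1
      · have : k = h.length := by omega
        subst this; rwa [List.take_left]

lemma follows_concat {s p : Player} {σ : Strategy} {h : List ℕ} {x : ℕ} :
    Follows s p σ (h ++ [x]) ↔
      Follows s p σ h ∧ (mover s h.length = p → x = σ h) := by
  constructor
  · intro hf
    constructor
    · intro k hk hm
      have := hf k (by simp; omega) hm
      rwa [getD_append_lt hk, take_append_le hk.le] at this
    · intro hm
      have := hf h.length (by simp) hm
      rwa [getD_append_len, List.take_left] at this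
  · rintro ⟨hf, hx⟩ k hk hm
    simp at hk
    rcases Nat.lt_or_ge k h.length with h1 | h1
    · rw [getD_append_lt h1, take_append_le h1.le]; exact hf k h1 hm
    · have : k = h.length := by omega
      subst this
      rw [getD_append_len, List.take_left]; exact hx hm

lemma length_le_card {G : Game} {s : Player} {h : List ℕ} (hv : ValidHist G s h) :
    h.length ≤ G.V.card := by
  have h1 : h.toFinset.card = h.length := List.toFinset_card_of_nodup hv.1
  have h2 : h.toFinset ⊆ G.V := fun a ha => hv.2.1 a (List.mem_toFinset.mp ha)
  calc h.length = h.toFinset.card := h1.symm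
    _ ≤ G.V.card := Finset.card_le_card h2

/-- At a valid history, at most one player has filled an edge. -/
lemma not_both_fills {G : Game} {s : Player} {h : List ℕ} (hwf : WellFormed G)
    (hv : ValidHist G s h) (hL : fills G.EL (picked s .L h))
    (hR : fills G.ER (picked s .R h)) : False := by
  rcases List.eq_nil_or_concat' h with rfl | ⟨h', x, rfl⟩
  · rw [picked_nil] at hL
    exact not_fills_empty (fun e he => (hwf.1 e he).2) hL
  · have hv' := valid_concat.mp hv
    have hne := hv'.2.2.2
    rcases Player.cases2 (mover s h'.length) with hm | hm
    · have : picked s .R (h' ++ [x]) = picked s .R h' := by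
        rw [picked_concat, if_neg (by rw [hm]; intro hc; cases hc)]
      rw [this] at hR
      exact hne (Or.inr hR)
    · have : picked s .L (h' ++ [x]) = picked s .L h' := by
        rw [picked_concat, if_neg (by rw [hm]; intro hc; cases hc)]
      rw [this] at hL
      exact hne (Or.inl hL)

lemma exists_unpicked {G : Game} {s : Player} {h : List ℕ} (hv : ValidHist G s h)
    (hlt : h.length < G.V.card) : ∃ v ∈ G.V, v ∉ h := by
  by_contra hc
  push_neg at hc
  have h2 : G.V ⊆ h.toFinset := fun a ha => List.mem_toFinset.mpr (hc a ha)
  have := Finset.card_le_card h2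
  rw [List.toFinset_card_of_nodup hv.1] at this
  omega

lemma toFinset_eq_of_full {G : Game} {s : Player} {h : List ℕ} (hv : ValidHist G s h)
    (hfull : h.length = G.V.card) : h.toFinset = G.V := by
  apply Finset.eq_of_subset_of_card_le
  · exact fun a ha => hv.2.1 a (List.mem_toFinset.mp ha)
  · rw [List.toFinset_card_of_nodup hv.1]; omega

/-! ### Determinacy (Zermelo) -/

lemma result_val_inj : Function.Injective Result.val := by
  intro a b hab; cases a <;> cases b <;> simp [Result.val] at hab ⊢

noncomputable instance : LinearOrder Result := LinearOrder.lift' Result.val result_val_inj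

lemma result_le_def {a b : Result} : a ≤ b ↔ a.val ≤ b.val := Iff.rfl

instance : OrderBot Result where
  bot := .Rwin
  bot_le := fun r => by cases r <;> simp [result_le_def, Result.val]

instance : OrderTop Result where
  top := .Lwin
  le_top := fun r => by cases r <;> simp [result_le_def, Result.val]

/-- `b` is at least as good as `a` for player `p`. -/
def rge (p : Player) (a b : Result) : Prop :=
  match p with
  | .L => a ≤ b
  | .R => b ≤ a

lemma rge_refl (p : Player) (a : Result) : rge p a a := by cases p <;> simp [rge]

lemma rge_trans {p : Player} {a b c : Result} (h1 : rge p a b) (h2 : rge p b c) :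
    rge p a c := by cases p <;> exact le_trans ‹_› ‹_›

/-- The set of available vertices. -/
noncomputable def avail (G : Game) (h : List ℕ) : Finset ℕ := G.V.filter (· ∉ h)

/-- Optimal choice of value for player `p` over a finite set of options. -/
noncomputable def ropt (p : Player) (t : Finset ℕ) (f : ℕ → Result) : Result :=
  match p with
  | .L => t.sup f
  | .R => t.inf f

lemma ropt_attained {p : Player} {t : Finset ℕ} (ht : t.Nonempty) (f : ℕ → Result) :
    ∃ x ∈ t, f x = ropt p t f := by
  cases p
  · obtain ⟨b, hb, he⟩ := Finset.exists_mem_eq_sup t ht f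
    exact ⟨b, hb, he.symm⟩
  · obtain ⟨b, hb, he⟩ := Finset.exists_mem_eq_inf t ht f
    exact ⟨b, hb, he.symm⟩

lemma rge_ropt_other {p : Player} {t : Finset ℕ} {x : ℕ} (hx : x ∈ t) (f : ℕ → Result) :
    rge p (ropt p.other t f) (f x) := by
  cases p
  · exact Finset.inf_le hx
  · exact Finset.le_sup hx

/-- Terminal evaluation of a final position. -/
noncomputable def eval (G : Game) (s : Player) (h : List ℕ) : Result :=
  if fills G.ER (picked s .R h) then .Rwin
  else if fills G.EL (picked s .L h) then .Lwin else .draw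

/-- Value of a position, computed with fuel. -/
noncomputable def valA (G : Game) (s : Player) : ℕ → List ℕ → Result
  | 0, h => eval G s h
  | n+1, h =>
    if ended G s h ∨ h.length = G.V.card then eval G s h
    else ropt (mover s h.length) (avail G h) (fun x => valA G s n (h ++ [x]))

noncomputable def val (G : Game) (s : Player) (h : List ℕ) : Result :=
  valA G s (G.V.card - h.length) h

lemma valA_succ (G : Game) (s : Player) (n : ℕ) (h : List ℕ) :
    valA G s (n+1) h = if ended G s h ∨ h.length = G.V.card then eval G s h
      else ropt (mover s h.length) (avail G h) (fun x => valA G s n (h ++ [x])) := rfl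

lemma val_terminal {G : Game} {s : Player} {h : List ℕ}
    (ht : ended G s h ∨ h.length = G.V.card) : val G s h = eval G s h := by
  unfold val
  rcases Nat.eq_zero_or_pos (G.V.card - h.length) with h0 | h0
  · rw [h0]; rfl
  · obtain ⟨n, hn⟩ := Nat.exists_eq_succ_of_ne_zero (by omega : G.V.card - h.length ≠ 0)
    rw [hn, valA_succ, if_pos ht]

lemma val_step {G : Game} {s : Player} {h : List ℕ}
    (hne : ¬ ended G s h) (hlt : h.length < G.V.card) :
    val G s h = ropt (mover s h.length) (avail G h) (fun x => val G s (h ++ [x])) := by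
  unfold val
  obtain ⟨n, hn⟩ := Nat.exists_eq_succ_of_ne_zero (by omega : G.V.card - h.length ≠ 0)
  rw [hn, valA_succ, if_neg (by push_neg; exact ⟨hne, by omega⟩)]
  congr 1
  funext x
  show valA G s n (h ++ [x]) = valA G s (G.V.card - (h ++ [x]).length) (h ++ [x])
  have : G.V.card - (h ++ [x]).length = n := by simp; omega
  rw [this]

lemma avail_nonempty {G : Game} {s : Player} {h : List ℕ} (hv : ValidHist G s h)
    (hlt : h.length < G.V.card) : (avail G h).Nonempty := by
  obtain ⟨v, hv1, hv2⟩ := exists_unpicked hv hlt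
  exact ⟨v, Finset.mem_filter.mpr ⟨hv1, hv2⟩⟩

noncomputable def pickMin (t : Finset ℕ) : ℕ := t.min.getD 0

lemma pickMin_mem {t : Finset ℕ} (ht : t.Nonempty) : pickMin t ∈ t := by
  obtain ⟨a, ha⟩ := Finset.min_of_nonempty ht
  rw [pickMin, ha]
  exact Finset.mem_of_min ha

/-- The optimal strategy for player `p`. -/
noncomputable def optStrat (G : Game) (s p : Player) : Strategy := fun h =>
  pickMin ((avail G h).filter
    (fun x => val G s (h ++ [x]) = ropt p (avail G h) (fun y => val G s (h ++ [y]))))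

lemma optStrat_spec {G : Game} {s p : Player} {h : List ℕ} (hv : ValidHist G s h)
    (hlt : h.length < G.V.card) :
    optStrat G s p h ∈ avail G h ∧
      val G s (h ++ [optStrat G s p h]) = ropt p (avail G h) (fun y => val G s (h ++ [y])) := by
  have hne := avail_nonempty hv hlt
  obtain ⟨x, hx, he⟩ := ropt_attained (p := p) hne (fun y => val G s (h ++ [y]))
  have hfne : ((avail G h).filter
      (fun x => val G s (h ++ [x]) = ropt p (avail G h) (fun y => val G s (h ++ [y])))).Nonempty :=
    ⟨x, Finset.mem_filter.mpr ⟨hx, he⟩⟩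
  have := pickMin_mem hfne
  rw [Finset.mem_filter] at this
  exact ⟨this.1, this.2⟩

lemma optStrat_legal (G : Game) (s p : Player) : Legal G s p (optStrat G s p) := by
  intro h hv _ hne hlt _
  have := (optStrat_spec (p := p) hv hlt).1
  rw [avail, Finset.mem_filter] at this
  exact this

lemma val_chain {G : Game} {s p : Player} {h : List ℕ} (hv : ValidHist G s h)
    (hf : Follows s p (optStrat G s p) h) : rge p (val G s []) (val G s h) := by
  induction h using List.reverseRecOn with
  | nil => exact rge_refl p _
  | append_singleton h x ih =>
    obtain ⟨hv', hxV, hxh, hne⟩ := valid_concat.mp hv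
    obtain ⟨hf', hx⟩ := follows_concat.mp hf
    have hlt : h.length < G.V.card := by
      have := length_le_card hv; simp at this; omega
    refine rge_trans (ih hv' hf') ?_
    rw [val_step hne hlt]
    by_cases hm : mover s h.length = p
    · rw [hx hm] at *
      rw [(optStrat_spec (p := p) hv' hlt).2, hm]
      exact rge_refl p _
    · have hmo : mover s h.length = p.other := by
        cases p <;> rcases Player.cases2 (mover s h.length) with h1 | h1 <;>
          simp_all [Player.other]
      rw [hmo]
      exact rge_ropt_other (Finset.mem_filter.mpr ⟨hxV, hxh⟩) _

lemma eval_eq_Lwin {G : Game} {s : Player} {h : List ℕ} (he : eval G s h = .Lwin) :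
    fills G.EL (picked s .L h) := by
  unfold eval at he
  by_cases h1 : fills G.ER (picked s .R h)
  · rw [if_pos h1] at he; cases he
  · rw [if_neg h1] at he
    by_cases h2 : fills G.EL (picked s .L h)
    · exact h2
    · rw [if_neg h2] at he; cases he

lemma eval_eq_Rwin {G : Game} {s : Player} {h : List ℕ} (he : eval G s h = .Rwin) :
    fills G.ER (picked s .R h) := by
  unfold eval at he
  by_cases h1 : fills G.ER (picked s .R h)
  · exact h1
  · rw [if_neg h1] at he
    by_cases h2 : fills G.EL (picked s .L h)
    · rw [if_pos h2] at he; cases he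
    · rw [if_neg h2] at he; cases he

lemma zermelo (G : Game) (s : Player) (hwf : WellFormed G) : ∃ r, resultIs G s r := by
  have key : ∀ p h, ValidHist G s h → Follows s p (optStrat G s p) h → Complete G s h →
      rge p (val G s []) (eval G s h) := by
    intro p h hv hf hc
    have h1 := val_chain hv hf
    have hc' : ended G s h ∨ h.length = G.V.card := hc
    rwa [val_terminal hc'] at h1
  rcases hval : val G s [] with _ | _ | _
  · -- Lwin
    refine ⟨.Lwin, optStrat G s .L, optStrat_legal G s .L, ?_⟩
    intro h hv hf hc
    have h1 := key .L h hv hf hc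
    rw [hval] at h1
    have h2 : eval G s h = .Lwin := by
      have : (Result.Lwin : Result) ≤ eval G s h := h1
      cases he : eval G s h <;> rw [he] at this <;>
        first | rfl | (exact absurd this (by simp [result_le_def, Result.val]))
    exact eval_eq_Lwin h2
  · -- draw
    refine ⟨.draw, ⟨optStrat G s .L, optStrat_legal G s .L, ?_⟩,
      ⟨optStrat G s .R, optStrat_legal G s .R, ?_⟩⟩
    · intro h hv hf hc
      have h1 := key .L h hv hf hc
      rw [hval] at h1
      show ¬ fills G.ER (picked s .R h)
      intro hfill
      have : eval G s h = .Rwin := by unfold eval; rw [if_pos hfill]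
      rw [this] at h1
      exact absurd h1 (by simp [rge, result_le_def, Result.val])
    · intro h hv hf hc
      have h1 := key .R h hv hf hc
      rw [hval] at h1
      show ¬ fills G.EL (picked s .L h)
      intro hfill
      by_cases h2 : fills G.ER (picked s .R h)
      · exact not_both_fills hwf hv hfill h2
      · have : eval G s h = .Lwin := by unfold eval; rw [if_neg h2, if_pos hfill]
        rw [this] at h1
        exact absurd h1 (by simp [rge, result_le_def, Result.val])
  · -- Rwin
    refine ⟨.Rwin, optStrat G s .R, optStrat_legal G s .R, ?_⟩
    intro h hv hf hc
    have h1 := key .R h hv hf hc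
    rw [hval] at h1
    have h2 : eval G s h = .Rwin := by
      have : eval G s h ≤ .Rwin := h1
      cases he : eval G s h <;> rw [he] at this <;>
        first | rfl | (exact absurd this (by simp [result_le_def, Result.val]))
    exact eval_eq_Rwin h2

/-! ### The union construction -/

lemma fills_mono_edges {E E' : Finset (Finset ℕ)} {S : Finset ℕ} (hE : E ⊆ E')
    (h : fills E S) : fills E' S := by
  obtain ⟨e, he, hs⟩ := h; exact ⟨e, hE he, hs⟩

def memB (S : Finset ℕ) (x : ℕ) : Bool := decide (x ∈ S)

lemma memB_iff {S : Finset ℕ} {x : ℕ} : memB S x = true ↔ x ∈ S := by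
  simp [memB]

lemma mem_filter_memB {S : Finset ℕ} {h : List ℕ} {x : ℕ} :
    x ∈ h.filter (memB S) ↔ x ∈ h ∧ x ∈ S := by
  rw [List.mem_filter, memB_iff]

lemma filter_concat (S : Finset ℕ) (h : List ℕ) (x : ℕ) :
    (h ++ [x]).filter (memB S) =
      if x ∈ S then h.filter (memB S) ++ [x] else h.filter (memB S) := by
  rw [List.filter_append]
  by_cases hx : x ∈ S
  · rw [if_pos hx]
    have : memB S x = true := memB_iff.mpr hx
    simp [List.filter, this]
  · rw [if_neg hx]
    have : memB S x = false := by simp [memB, hx]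
    simp [List.filter, this]

/-- Strategy for Left on `G`, depending on who started `G`. -/
def sigG (σ1 σ2 : Strategy) : Player → Strategy
  | .L => σ1
  | .R => σ2

/-- The hypotheses about the component games and strategies. -/
structure Ctx (G G' : Game) (σ1 σ2 σ3 : Strategy) : Prop where
  wfG : WellFormed G
  wfG' : WellFormed G'
  disj : Disjoint G.V G'.V
  leg : ∀ sG, Legal G sG .L (sigG σ1 σ2 sG)
  win : ∀ sG h, ValidHist G sG h → Follows sG .L (sigG σ1 σ2 sG) h → Complete G sG h →
        fills G.EL (picked sG .L h)
  leg3 : Legal G' .L .L σ3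
  nl3 : ∀ h, ValidHist G' .L h → Follows .L .L σ3 h → Complete G' .L h →
        ¬ fills G'.ER (picked .L .R h)

/-- The invariant of the constructed play on the union. -/
structure Inv (G G' : Game) (τ σ1 σ2 σ3 : Strategy)
    (h f : List ℕ) (sG : Player) (d : Option ℕ) : Prop where
  vh : ValidHist (gunion G G') .L h
  fh : Follows .L .R τ h
  vf : ValidHist G sG f
  ff : Follows sG .L (sigG σ1 σ2 sG) f
  pRf : picked sG .R f = picked .L .R h ∩ G.V
  pLf : picked sG .L f ∪ d.toFinset = picked .L .L h ∩ G.V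
  hd : ∀ z, d = some z → z ∉ f ∧ z ∈ G.V ∧
        (h.filter (memB G'.V)).length = G'.V.card ∧ f ≠ []
  de : d ≠ none → h.length % 2 = 0 → mover sG f.length = .L
  vg : ValidHist G' .L (h.filter (memB G'.V))
  fg : Follows .L .L σ3 (h.filter (memB G'.V))
  pRg : picked .L .R (h.filter (memB G'.V)) = picked .L .R h ∩ G'.V
  pLg : picked .L .L (h.filter (memB G'.V)) = picked .L .L h ∩ G'.V
  par : if h.length % 2 = 0 then
      (mover sG f.length = .L ∧ ((h.filter (memB G'.V)).length % 2 = 1 ∨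
          (h.filter (memB G'.V)).length = G'.V.card))
      ∨ (mover sG f.length = .R ∧ (h.filter (memB G'.V)).length % 2 = 0)
    else mover sG f.length = .R ∧ ((h.filter (memB G'.V)).length % 2 = 1 ∨
          (h.filter (memB G'.V)).length = G'.V.card)

section UnionLemmas

variable {G G' : Game} {τ σ1 σ2 σ3 : Strategy} {h f : List ℕ} {sG : Player} {d : Option ℕ}

lemma mover_L_even {n : ℕ} (hn : n % 2 = 0) : mover .L n = .L := by simp [mover, hn]

lemma mover_L_odd {n : ℕ} (hn : n % 2 = 1) : mover .L n = .R := by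
  simp [mover, hn, Player.other]

lemma Inv.mem_f (inv : Inv G G' τ σ1 σ2 σ3 h f sG d) {a : ℕ} (ha : a ∈ f) :
    a ∈ h ∧ a ∈ G.V := by
  have h1 : a ∈ picked sG .L f ∪ picked sG .R f := by
    rw [picked_union]; exact List.mem_toFinset.mpr ha
  rcases Finset.mem_union.mp h1 with h2 | h2
  · have h3 : a ∈ picked .L .L h ∩ G.V := by
      rw [← inv.pLf]; exact Finset.mem_union_left _ h2
    exact ⟨mem_of_mem_picked (Finset.mem_inter.mp h3).1, (Finset.mem_inter.mp h3).2⟩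
  · have h3 : a ∈ picked .L .R h ∩ G.V := by rw [← inv.pRf]; exact h2
    exact ⟨mem_of_mem_picked (Finset.mem_inter.mp h3).1, (Finset.mem_inter.mp h3).2⟩

lemma Inv.mem_d (inv : Inv G G' τ σ1 σ2 σ3 h f sG d) {z : ℕ} (hz : d = some z) :
    z ∈ h ∧ z ∈ G.V := by
  have h1 : z ∈ picked sG .L f ∪ d.toFinset := by
    apply Finset.mem_union_right; rw [hz]; simp
  rw [inv.pLf] at h1
  exact ⟨mem_of_mem_picked (Finset.mem_inter.mp h1).1, (Finset.mem_inter.mp h1).2⟩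

lemma Inv.not_ended_f (inv : Inv G G' τ σ1 σ2 σ3 h f sG d)
    (hne : ¬ ended (gunion G G') .L h) : ¬ ended G sG f := by
  intro he
  apply hne
  rcases he with he | he
  · left
    refine fills_mono_edges (Finset.subset_union_left) (fills_mono ?_ he)
    intro a ha
    have : a ∈ picked .L .L h ∩ G.V := by
      rw [← inv.pLf]; exact Finset.mem_union_left _ ha
    exact (Finset.mem_inter.mp this).1
  · right
    refine fills_mono_edges (Finset.subset_union_left) (fills_mono ?_ he)
    intro a ha
    rw [inv.pRf] at ha
    exact (Finset.mem_inter.mp ha).1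

lemma Inv.not_ended_g (inv : Inv G G' τ σ1 σ2 σ3 h f sG d)
    (hne : ¬ ended (gunion G G') .L h) : ¬ ended G' .L (h.filter (memB G'.V)) := by
  intro he
  apply hne
  rcases he with he | he
  · left
    refine fills_mono_edges (Finset.subset_union_right) (fills_mono ?_ he)
    rw [inv.pLg]
    exact Finset.inter_subset_left
  · right
    refine fills_mono_edges (Finset.subset_union_right) (fills_mono ?_ he)
    rw [inv.pRg]
    exact Finset.inter_subset_left

lemma Inv.flen_lt (ctx : Ctx G G' σ1 σ2 σ3) (inv : Inv G G' τ σ1 σ2 σ3 h f sG d)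
    (hne : ¬ ended (gunion G G') .L h) : f.length < G.V.card := by
  rcases Nat.lt_or_ge f.length G.V.card with h1 | h1
  · exact h1
  · exfalso
    have h2 := length_le_card inv.vf
    have h3 : f.length = G.V.card := by omega
    have h4 := ctx.win sG f inv.vf inv.ff (Or.inr h3)
    apply hne
    left
    refine fills_mono_edges (Finset.subset_union_left) (fills_mono ?_ h4)
    intro a ha
    have : a ∈ picked .L .L h ∩ G.V := by
      rw [← inv.pLf]; exact Finset.mem_union_left _ ha
    exact (Finset.mem_inter.mp this).1

end UnionLemmas

section UnionLemmas2

variable {G G' : Game} {τ σ1 σ2 σ3 : Strategy} {h f : List ℕ} {sG : Player} {d : Option ℕ}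

/-- When the constructed play is finished, Left has filled one of their edges. -/
lemma final_lemma (ctx : Ctx G G' σ1 σ2 σ3) (inv : Inv G G' τ σ1 σ2 σ3 h f sG d)
    (hend : ended (gunion G G') .L h ∨ h.length = (gunion G G').V.card) :
    fills (gunion G G').EL (picked .L .L h) := by
  by_cases he : ended (gunion G G') .L h
  · rcases he with he | he
    · exact he
    · -- a Right fill: impossible
      exfalso
      obtain ⟨e, hemem, hesub⟩ := he
      rcases Finset.mem_union.mp hemem with heG | heG
      · have heV : e ⊆ G.V := (ctx.wfG.2 e heG).1
        have h1 : e ⊆ picked sG .R f := by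
          rw [inv.pRf]
          intro a ha
          exact Finset.mem_inter.mpr ⟨hesub ha, heV ha⟩
        have h2 : ended G sG f := Or.inr ⟨e, heG, h1⟩
        have h3 := ctx.win sG f inv.vf inv.ff (Or.inl h2)
        exact not_both_fills ctx.wfG inv.vf h3 ⟨e, heG, h1⟩
      · have heV : e ⊆ G'.V := (ctx.wfG'.2 e heG).1
        have h1 : e ⊆ picked .L .R (h.filter (memB G'.V)) := by
          rw [inv.pRg]
          intro a ha
          exact Finset.mem_inter.mpr ⟨hesub ha, heV ha⟩
        have h2 : ended G' .L (h.filter (memB G'.V)) := Or.inr ⟨e, heG, h1⟩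
        exact ctx.nl3 _ inv.vg inv.fg (Or.inl h2) ⟨e, heG, h1⟩
  · -- the board is full
    have hfull : h.length = (gunion G G').V.card := by tauto
    have htf : h.toFinset = G.V ∪ G'.V := toFinset_eq_of_full inv.vh hfull
    have hGfull : (picked .L .L h ∩ G.V) ∪ (picked .L .R h ∩ G.V) = G.V := by
      rw [← Finset.union_inter_distrib_right, picked_union, htf]
      ext a
      simp only [Finset.mem_inter, Finset.mem_union]
      tauto
    have key : fills G.EL (picked .L .L h ∩ G.V) := by
      rcases hdd : d with _ | z
      · -- no debt: `f` is itself complete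
        have h5 := inv.pLf
        rw [hdd] at h5
        simp only [Option.toFinset_none, Finset.union_empty] at h5
        have hf1 : picked sG .L f ∪ picked sG .R f = G.V := by
          rw [h5, inv.pRf]; exact hGfull
        have hf2 : f.toFinset = G.V := by rw [← picked_union]; exact hf1
        have hf3 : f.length = G.V.card := by
          rw [← List.toFinset_card_of_nodup inv.vf.1, hf2]
        have h4 := ctx.win sG f inv.vf inv.ff (Or.inr hf3)
        refine fills_mono ?_ h4
        rw [← h5]
      · -- debt `z`: complete `f` with one extra (Right or forced Left) move `z`
        obtain ⟨hz1, hz2, _, _⟩ := inv.hd z hdd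
        have h5 := inv.pLf
        rw [hdd] at h5
        simp only [Option.toFinset_some] at h5
        have hset : (picked sG .L f ∪ {z}) ∪ picked sG .R f = G.V := by
          rw [h5, inv.pRf]; exact hGfull
        have hf1 : f.toFinset ∪ {z} = G.V := by
          rw [← picked_union]
          ext a
          have := Finset.ext_iff.mp hset a
          simp only [Finset.mem_union, Finset.mem_singleton] at this ⊢
          rw [← this, or_right_comm]
        have hzf : z ∉ f.toFinset := fun hc => hz1 (List.mem_toFinset.mp hc)
        have hcard : f.length + 1 = G.V.card := by
          rw [← hf1, Finset.union_comm, ← Finset.insert_eq,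
            Finset.card_insert_of_notMem hzf, List.toFinset_card_of_nodup inv.vf.1]
        have hnef : ¬ ended G sG f := inv.not_ended_f he
        have hvf' : ValidHist G sG (f ++ [z]) :=
          valid_concat.mpr ⟨inv.vf, hz2, hz1, hnef⟩
        have hff' : Follows sG .L (sigG σ1 σ2 sG) (f ++ [z]) := by
          refine follows_concat.mpr ⟨inv.ff, ?_⟩
          intro hm
          obtain ⟨hs1, hs2⟩ := ctx.leg sG f inv.vf inv.ff hnef (by omega) hm
          have : sigG σ1 σ2 sG f ∈ f.toFinset ∪ {z} := by rw [hf1]; exact hs1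
          rcases Finset.mem_union.mp this with hc | hc
          · exact absurd (List.mem_toFinset.mp hc) hs2
          · exact (Finset.mem_singleton.mp hc).symm
        have hcomp : Complete G sG (f ++ [z]) := Or.inr (by simp; omega)
        have h4 := ctx.win sG (f ++ [z]) hvf' hff' hcomp
        refine fills_mono ?_ h4
        intro a ha
        rw [picked_concat] at ha
        rw [← h5]
        by_cases hm : mover sG f.length = Player.L
        · rw [if_pos hm] at ha
          rcases Finset.mem_insert.mp ha with rfl | ha
          · exact Finset.mem_union_right _ (Finset.mem_singleton_self _)
          · exact Finset.mem_union_left _ ha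
        · rw [if_neg hm] at ha
          exact Finset.mem_union_left _ ha
    refine fills_mono_edges Finset.subset_union_left (fills_mono ?_ key)
    exact Finset.inter_subset_left

end UnionLemmas2

section UnionLemmas3

variable {G G' : Game} {τ σ1 σ2 σ3 : Strategy} {h f : List ℕ} {sG : Player} {d : Option ℕ}

lemma stepR (ctx : Ctx G G' σ1 σ2 σ3) (hτ : Legal (gunion G G') .L .R τ)
    (inv : Inv G G' τ σ1 σ2 σ3 h f sG d) (hodd : h.length % 2 = 1)
    (hne : ¬ ended (gunion G G') .L h) (hlt : h.length < (gunion G G').V.card) :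
    ∃ x f' d', Inv G G' τ σ1 σ2 σ3 (h ++ [x]) f' sG d' := by
  have hmh : mover .L h.length = .R := mover_L_odd hodd
  obtain ⟨hyV, hyh⟩ := hτ h inv.vh inv.fh hne hlt hmh
  obtain ⟨hpar1, hpar2⟩ : mover sG f.length = .R ∧
      ((h.filter (memB G'.V)).length % 2 = 1 ∨ (h.filter (memB G'.V)).length = G'.V.card) := by
    have := inv.par; rw [if_neg (by omega)] at this; exact this
  rcases Finset.mem_union.mp hyV with hyG | hyG
  · -- Right plays in G
    have hyG2 : τ h ∉ G'.V := Finset.disjoint_left.mp ctx.disj hyG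
    have hyf : τ h ∉ f := fun hc => hyh (inv.mem_f hc).1
    refine ⟨τ h, f ++ [τ h], d, ?_⟩
    refine ⟨valid_concat.mpr ⟨inv.vh, hyV, hyh, hne⟩,
      follows_concat.mpr ⟨inv.fh, fun _ => rfl⟩,
      valid_concat.mpr ⟨inv.vf, hyG, hyf, inv.not_ended_f hne⟩,
      follows_concat.mpr ⟨inv.ff, fun hm => absurd (hpar1.symm.trans hm) (by decide)⟩,
      ?_, ?_, ?_, ?_, ?_, ?_, ?_, ?_, ?_⟩
    · rw [picked_concat, if_pos hpar1, picked_concat, if_pos hmh,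
        Finset.insert_inter_of_mem hyG, inv.pRf]
    · rw [picked_concat, if_neg (by rw [hpar1]; decide),
        picked_concat, if_neg (by rw [hmh]; decide)]
      exact inv.pLf
    · intro z hz
      obtain ⟨ho1, ho2, ho3, _⟩ := inv.hd z hz
      refine ⟨?_, ho2, ?_, by simp⟩
      · intro hc
        rcases List.mem_append.mp hc with hc | hc
        · exact ho1 hc
        · simp at hc; subst hc; exact hyh (inv.mem_d hz).1
      · rw [filter_concat, if_neg hyG2]; exact ho3
    · intro _ _
      rw [List.length_append, List.length_singleton, mover_succ, hpar1]; rfl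
    · rw [filter_concat, if_neg hyG2]; exact inv.vg
    · rw [filter_concat, if_neg hyG2]; exact inv.fg
    · rw [filter_concat, if_neg hyG2, inv.pRg, picked_concat, if_pos hmh,
        Finset.insert_inter_of_notMem hyG2]
    · rw [filter_concat, if_neg hyG2, inv.pLg, picked_concat,
        if_neg (by rw [hmh]; decide)]
    · rw [if_pos (by simp; omega)]
      left
      constructor
      · rw [List.length_append, List.length_singleton, mover_succ, hpar1]; rfl
      · rw [filter_concat, if_neg hyG2]; exact hpar2
  · -- Right plays in G'
    have hyG2 : τ h ∉ G.V := Finset.disjoint_left.mp ctx.disj.symm hyG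
    have hyhg : τ h ∉ h.filter (memB G'.V) := fun hc => hyh (mem_filter_memB.mp hc).1
    have hnotfull : (h.filter (memB G'.V)).length ≠ G'.V.card := by
      intro hfull
      have := toFinset_eq_of_full inv.vg hfull
      apply hyh
      have : τ h ∈ (h.filter (memB G'.V)).toFinset := by rw [this]; exact hyG
      exact (mem_filter_memB.mp (List.mem_toFinset.mp this)).1
    have hodd' : (h.filter (memB G'.V)).length % 2 = 1 := by tauto
    have hmg : mover .L (h.filter (memB G'.V)).length = .R := mover_L_odd hodd'
    have hdnone : d = none := by
      rcases hdd : d with _ | z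
      · rfl
      · exact absurd (inv.hd z hdd).2.2.1 hnotfull
    subst hdnone
    refine ⟨τ h, f, none, ?_⟩
    refine ⟨valid_concat.mpr ⟨inv.vh, hyV, hyh, hne⟩,
      follows_concat.mpr ⟨inv.fh, fun _ => rfl⟩, inv.vf, inv.ff, ?_, ?_, ?_, ?_,
      ?_, ?_, ?_, ?_, ?_⟩
    · rw [picked_concat, if_pos hmh, Finset.insert_inter_of_notMem hyG2, inv.pRf]
    · rw [picked_concat, if_neg (by rw [hmh]; decide)]
      exact inv.pLf
    · intro z hz; cases hz
    · intro hc; exact absurd rfl hc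
    · rw [filter_concat, if_pos hyG]
      exact valid_concat.mpr ⟨inv.vg, hyG, hyhg, inv.not_ended_g hne⟩
    · rw [filter_concat, if_pos hyG]
      exact follows_concat.mpr ⟨inv.fg, fun hm => absurd (hmg.symm.trans hm) (by decide)⟩
    · rw [filter_concat, if_pos hyG, picked_concat, if_pos hmg, picked_concat, if_pos hmh,
        Finset.insert_inter_of_mem hyG, inv.pRg]
    · rw [filter_concat, if_pos hyG, picked_concat, if_neg (by rw [hmg]; decide),
        picked_concat, if_neg (by rw [hmh]; decide), inv.pLg]
    · rw [if_pos (by simp; omega)]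
      right
      refine ⟨hpar1, ?_⟩
      rw [filter_concat, if_pos hyG, List.length_append, List.length_singleton]
      omega

end UnionLemmas3

lemma picked_single (s p : Player) (x : ℕ) :
    picked s p [x] = if s = p then {x} else ∅ := by
  have h1 := picked_concat s p [] x
  simp only [List.nil_append, List.length_nil, mover_zero, picked_nil] at h1
  rw [h1]
  split <;> rfl

section UnionLemmas4

variable {G G' : Game} {τ σ1 σ2 σ3 : Strategy} {h f : List ℕ} {sG : Player} {d : Option ℕ}

lemma stepL (ctx : Ctx G G' σ1 σ2 σ3)
    (inv : Inv G G' τ σ1 σ2 σ3 h f sG d) (heven : h.length % 2 = 0)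
    (hne : ¬ ended (gunion G G') .L h) (hlt : h.length < (gunion G G').V.card) :
    ∃ x f' sG' d', Inv G G' τ σ1 σ2 σ3 (h ++ [x]) f' sG' d' := by
  have hmh : mover .L h.length = .L := mover_L_even heven
  have hfhv : ∀ x : ℕ, mover .L h.length = .R → x = τ h :=
    fun x hm => absurd (hmh.symm.trans hm) (by decide)
  have hpar := inv.par
  rw [if_pos heven] at hpar
  rcases hpar with ⟨hfL, hoddfull⟩ | ⟨hfR, haeven⟩
  · -- Branch A : Left responds in G, following sigG
    have hnef : ¬ ended G sG f := inv.not_ended_f hne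
    have hflt : f.length < G.V.card := inv.flen_lt ctx hne
    obtain ⟨hmV, hmf⟩ := ctx.leg sG f inv.vf inv.ff hnef hflt hfL
    set m := sigG σ1 σ2 sG f with hm
    have hmG2 : m ∉ G'.V := Finset.disjoint_left.mp ctx.disj hmV
    by_cases hmh2 : m ∈ h
    · -- A2 : the suggested move is the debt; swap
      have hdd : d = some m := by
        have hm1 : m ∈ picked .L .L h ∪ picked .L .R h := by
          rw [picked_union]; exact List.mem_toFinset.mpr hmh2
        have hm2 : m ∈ (picked sG .L f ∪ d.toFinset) ∪ picked sG .R f := by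
          rw [inv.pLf, inv.pRf]
          rcases Finset.mem_union.mp hm1 with h1 | h1
          · exact Finset.mem_union_left _ (Finset.mem_inter.mpr ⟨h1, hmV⟩)
          · exact Finset.mem_union_right _ (Finset.mem_inter.mpr ⟨h1, hmV⟩)
        have hm3 : m ∈ d.toFinset := by
          rcases Finset.mem_union.mp hm2 with h1 | h1
          · rcases Finset.mem_union.mp h1 with h2 | h2
            · exact absurd (mem_of_mem_picked h2) hmf
            · exact h2
          · exact absurd (mem_of_mem_picked h1) hmf
        rcases hdc : d with _ | z
        · rw [hdc] at hm3; simp at hm3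
        · rw [hdc] at hm3; simp at hm3; rw [hm3]
      have ha3 : (h.filter (memB G'.V)).length = G'.V.card := (inv.hd m hdd).2.2.1
      have e0 := inv.pLf
      rw [hdd] at e0
      simp only [Option.toFinset_some] at e0
      have hfresh : ∃ x', x' ∈ G.V ∧ x' ∉ h := by
        by_contra hc
        push_neg at hc
        have hvf' : ValidHist G sG (f ++ [m]) := valid_concat.mpr ⟨inv.vf, hmV, hmf, hnef⟩
        have hff' : Follows sG .L (sigG σ1 σ2 sG) (f ++ [m]) :=
          follows_concat.mpr ⟨inv.ff, fun _ => rfl⟩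
        have hfull : (f ++ [m]).toFinset = G.V := by
          apply Finset.Subset.antisymm
          · intro a ha
            rcases List.mem_append.mp (List.mem_toFinset.mp ha) with ha | ha
            · exact (inv.mem_f ha).2
            · simp at ha; subst ha; exact hmV
          · intro a ha
            have h1 : a ∈ picked .L .L h ∪ picked .L .R h := by
              rw [picked_union]; exact List.mem_toFinset.mpr (hc a ha)
            have h2 : a ∈ (picked sG .L f ∪ {m}) ∪ picked sG .R f := by
              rw [e0, inv.pRf]
              rcases Finset.mem_union.mp h1 with h3 | h3
              · exact Finset.mem_union_left _ (Finset.mem_inter.mpr ⟨h3, ha⟩)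
              · exact Finset.mem_union_right _ (Finset.mem_inter.mpr ⟨h3, ha⟩)
            rw [List.mem_toFinset, List.mem_append]
            rcases Finset.mem_union.mp h2 with h3 | h3
            · rcases Finset.mem_union.mp h3 with h4 | h4
              · exact Or.inl (mem_of_mem_picked h4)
              · simp at h4; subst h4; simp
            · exact Or.inl (mem_of_mem_picked h3)
        have hlen : (f ++ [m]).length = G.V.card := by
          rw [← List.toFinset_card_of_nodup hvf'.1, hfull]
        have hwin := ctx.win sG (f ++ [m]) hvf' hff' (Or.inr hlen)
        apply hne
        left
        refine fills_mono_edges Finset.subset_union_left (fills_mono ?_ hwin)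
        rw [picked_concat, if_pos hfL]
        intro a ha
        have : a ∈ picked .L .L h ∩ G.V := by
          rw [← e0]
          rcases Finset.mem_insert.mp ha with rfl | ha
          · exact Finset.mem_union_right _ (Finset.mem_singleton_self _)
          · exact Finset.mem_union_left _ ha
        exact (Finset.mem_inter.mp this).1
      obtain ⟨x', hx'G, hx'h⟩ := hfresh
      have hx'G2 : x' ∉ G'.V := Finset.disjoint_left.mp ctx.disj hx'G
      refine ⟨x', f ++ [m], sG, some x', ?_⟩
      refine ⟨valid_concat.mpr ⟨inv.vh, Finset.mem_union_left _ hx'G, hx'h, hne⟩,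
        follows_concat.mpr ⟨inv.fh, hfhv x'⟩,
        valid_concat.mpr ⟨inv.vf, hmV, hmf, hnef⟩,
        follows_concat.mpr ⟨inv.ff, fun _ => rfl⟩, ?_, ?_, ?_, ?_, ?_, ?_, ?_, ?_, ?_⟩
      · rw [picked_concat, if_neg (by rw [hfL]; decide),
          picked_concat, if_neg (by rw [hmh]; decide)]
        exact inv.pRf
      · rw [picked_concat, if_pos hfL, picked_concat, if_pos hmh,
          Finset.insert_inter_of_mem hx'G, Option.toFinset_some, ← e0]
        ext a
        simp only [Finset.mem_union, Finset.mem_insert, Finset.mem_singleton]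
        tauto
      · intro z hz
        injection hz with hz
        subst hz
        refine ⟨?_, hx'G, ?_, by simp⟩
        · intro hc
          rcases List.mem_append.mp hc with hc | hc
          · exact hx'h (inv.mem_f hc).1
          · simp at hc; subst hc; exact hx'h hmh2
        · rw [filter_concat, if_neg hx'G2]; exact ha3
      · intro _ hc
        simp at hc; omega
      · rw [filter_concat, if_neg hx'G2]; exact inv.vg
      · rw [filter_concat, if_neg hx'G2]; exact inv.fg
      · rw [filter_concat, if_neg hx'G2, inv.pRg, picked_concat,
          if_neg (by rw [hmh]; decide)]
      · rw [filter_concat, if_neg hx'G2, inv.pLg, picked_concat, if_pos hmh,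
          Finset.insert_inter_of_notMem hx'G2]
      · rw [if_neg (by simp; omega)]
        constructor
        · rw [List.length_append, List.length_singleton, mover_succ, hfL]; rfl
        · rw [filter_concat, if_neg hx'G2]; exact Or.inr ha3
    · -- A1 : play the suggested move
      refine ⟨m, f ++ [m], sG, d, ?_⟩
      refine ⟨valid_concat.mpr ⟨inv.vh, Finset.mem_union_left _ hmV, hmh2, hne⟩,
        follows_concat.mpr ⟨inv.fh, hfhv m⟩,
        valid_concat.mpr ⟨inv.vf, hmV, hmf, hnef⟩,
        follows_concat.mpr ⟨inv.ff, fun _ => rfl⟩, ?_, ?_, ?_, ?_, ?_, ?_, ?_, ?_, ?_⟩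
      · rw [picked_concat, if_neg (by rw [hfL]; decide),
          picked_concat, if_neg (by rw [hmh]; decide)]
        exact inv.pRf
      · rw [picked_concat, if_pos hfL, picked_concat, if_pos hmh,
          Finset.insert_inter_of_mem hmV, ← inv.pLf]
        ext a
        simp only [Finset.mem_union, Finset.mem_insert]
        tauto
      · intro z hz
        obtain ⟨ho1, ho2, ho3, _⟩ := inv.hd z hz
        refine ⟨?_, ho2, ?_, by simp⟩
        · intro hc
          rcases List.mem_append.mp hc with hc | hc
          · exact ho1 hc
          · simp at hc; subst hc; exact hmh2 (inv.mem_d hz).1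
        · rw [filter_concat, if_neg hmG2]; exact ho3
      · intro _ hc
        simp at hc; omega
      · rw [filter_concat, if_neg hmG2]; exact inv.vg
      · rw [filter_concat, if_neg hmG2]; exact inv.fg
      · rw [filter_concat, if_neg hmG2, inv.pRg, picked_concat,
          if_neg (by rw [hmh]; decide)]
      · rw [filter_concat, if_neg hmG2, inv.pLg, picked_concat, if_pos hmh,
          Finset.insert_inter_of_notMem hmG2]
      · rw [if_neg (by simp; omega)]
        constructor
        · rw [List.length_append, List.length_singleton, mover_succ, hfL]; rfl
        · rw [filter_concat, if_neg hmG2]; exact hoddfull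
  · -- Branch B : Left plays in G' (or is forced into G)
    by_cases hafull : (h.filter (memB G'.V)).length = G'.V.card
    · -- B2 : G' is full, Left is forced to play in G
      have hdnone : d = none := by
        rcases hdd : d with _ | z
        · rfl
        · exfalso
          have := inv.de (by rw [hdd]; simp) heven
          rw [hfR] at this
          cases this
      have e0 := inv.pLf
      rw [hdnone] at e0
      simp only [Option.toFinset_none, Finset.union_empty] at e0
      obtain ⟨v, hvV, hvh⟩ := exists_unpicked inv.vh hlt
      have hvG : v ∈ G.V := by
        rcases Finset.mem_union.mp hvV with h1 | h1
        · exact h1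
        · exfalso
          have h2 := toFinset_eq_of_full inv.vg hafull
          apply hvh
          have : v ∈ (h.filter (memB G'.V)).toFinset := by rw [h2]; exact h1
          exact (mem_filter_memB.mp (List.mem_toFinset.mp this)).1
      have hvG2 : v ∉ G'.V := Finset.disjoint_left.mp ctx.disj hvG
      by_cases hf0 : f = []
      · -- B2a : G untouched; Left opens G as first player
        subst hf0
        have hend0 : ¬ ended G .L [] := by
          rintro (hc | hc) <;> rw [picked_nil] at hc
          · exact not_fills_empty (fun e he => (ctx.wfG.1 e he).2) hc
          · exact not_fills_empty (fun e he => (ctx.wfG.2 e he).2) hc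
        have hpos : 0 < G.V.card := Finset.card_pos.mpr ⟨v, hvG⟩
        obtain ⟨hmV, _⟩ := ctx.leg .L [] (valid_nil G .L) (follows_nil _ _ _) hend0 hpos
          (by rw [List.length_nil, mover_zero])
        set m := sigG σ1 σ2 .L [] with hm
        have hmG2 : m ∉ G'.V := Finset.disjoint_left.mp ctx.disj hmV
        have hmh2 : m ∉ h := by
          intro hc
          have h1 : m ∈ picked .L .L h ∪ picked .L .R h := by
            rw [picked_union]; exact List.mem_toFinset.mpr hc
          have h2 : m ∈ (picked .L .L h ∩ G.V) ∪ (picked .L .R h ∩ G.V) := by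
            rcases Finset.mem_union.mp h1 with h3 | h3
            · exact Finset.mem_union_left _ (Finset.mem_inter.mpr ⟨h3, hmV⟩)
            · exact Finset.mem_union_right _ (Finset.mem_inter.mpr ⟨h3, hmV⟩)
          rw [← e0, ← inv.pRf, picked_nil, picked_nil] at h2
          simp at h2
        refine ⟨m, [m], .L, none, ?_⟩
        refine ⟨valid_concat.mpr ⟨inv.vh, Finset.mem_union_left _ hmV, hmh2, hne⟩,
          follows_concat.mpr ⟨inv.fh, hfhv m⟩,
          valid_concat.mpr ⟨valid_nil G .L, hmV, by simp, hend0⟩,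
          follows_concat.mpr ⟨follows_nil _ _ _, fun _ => rfl⟩, ?_, ?_, ?_, ?_, ?_, ?_, ?_, ?_, ?_⟩
        · rw [picked_single, if_neg (by decide), picked_concat, if_neg (by rw [hmh]; decide),
            ← inv.pRf, picked_nil]
        · rw [picked_single, if_pos rfl, picked_concat, if_pos hmh,
            Finset.insert_inter_of_mem hmV, ← e0, picked_nil]
          simp
        · intro z hz; cases hz
        · intro hc; exact absurd rfl hc
        · rw [filter_concat, if_neg hmG2]; exact inv.vg
        · rw [filter_concat, if_neg hmG2]; exact inv.fg
        · rw [filter_concat, if_neg hmG2, inv.pRg, picked_concat,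
            if_neg (by rw [hmh]; decide)]
        · rw [filter_concat, if_neg hmG2, inv.pLg, picked_concat, if_pos hmh,
            Finset.insert_inter_of_notMem hmG2]
        · rw [if_neg (by simp; omega)]
          constructor
          · rw [List.length_singleton]; decide
          · rw [filter_concat, if_neg hmG2]; exact Or.inr hafull
      · -- B2b : create a debt move
        refine ⟨v, f, sG, some v, ?_⟩
        refine ⟨valid_concat.mpr ⟨inv.vh, hvV, hvh, hne⟩,
          follows_concat.mpr ⟨inv.fh, hfhv v⟩, inv.vf, inv.ff, ?_, ?_, ?_, ?_, ?_, ?_, ?_, ?_, ?_⟩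
        · rw [picked_concat, if_neg (by rw [hmh]; decide)]
          exact inv.pRf
        · rw [picked_concat, if_pos hmh, Finset.insert_inter_of_mem hvG,
            Option.toFinset_some, ← e0]
          ext a
          simp only [Finset.mem_union, Finset.mem_insert, Finset.mem_singleton]
          tauto
        · intro z hz
          injection hz with hz
          subst hz
          refine ⟨fun hc => hvh (inv.mem_f hc).1, hvG, ?_, hf0⟩
          rw [filter_concat, if_neg hvG2]; exact hafull
        · intro _ hc
          simp at hc; omega
        · rw [filter_concat, if_neg hvG2]; exact inv.vg
        · rw [filter_concat, if_neg hvG2]; exact inv.fg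
        · rw [filter_concat, if_neg hvG2, inv.pRg, picked_concat,
            if_neg (by rw [hmh]; decide)]
        · rw [filter_concat, if_neg hvG2, inv.pLg, picked_concat, if_pos hmh,
            Finset.insert_inter_of_notMem hvG2]
        · rw [if_neg (by simp; omega)]
          exact ⟨hfR, Or.inr (by rw [filter_concat, if_neg hvG2]; exact hafull)⟩
    · -- B1 : Left answers in G' following σ3
      have hneg : ¬ ended G' .L (h.filter (memB G'.V)) := inv.not_ended_g hne
      have halt : (h.filter (memB G'.V)).length < G'.V.card := by
        have := length_le_card inv.vg; omega
      have hag : mover .L (h.filter (memB G'.V)).length = .L := mover_L_even haeven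
      obtain ⟨hmV', hmhg⟩ := ctx.leg3 _ inv.vg inv.fg hneg halt hag
      set m := σ3 (h.filter (memB G'.V)) with hm
      have hmG : m ∉ G.V := Finset.disjoint_left.mp ctx.disj.symm hmV'
      have hmh2 : m ∉ h := fun hc => hmhg (mem_filter_memB.mpr ⟨hc, hmV'⟩)
      refine ⟨m, f, sG, d, ?_⟩
      refine ⟨valid_concat.mpr ⟨inv.vh, Finset.mem_union_right _ hmV', hmh2, hne⟩,
        follows_concat.mpr ⟨inv.fh, hfhv m⟩, inv.vf, inv.ff, ?_, ?_, ?_, ?_, ?_, ?_, ?_, ?_, ?_⟩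
      · rw [picked_concat, if_neg (by rw [hmh]; decide)]
        exact inv.pRf
      · rw [picked_concat, if_pos hmh, Finset.insert_inter_of_notMem hmG]
        exact inv.pLf
      · intro z hz
        exact absurd (inv.hd z hz).2.2.1 hafull
      · intro hdn _
        rcases hdd : d with _ | z
        · exact absurd hdd hdn
        · exact absurd (inv.hd z hdd).2.2.1 hafull
      · rw [filter_concat, if_pos hmV']
        exact valid_concat.mpr ⟨inv.vg, hmV', hmhg, hneg⟩
      · rw [filter_concat, if_pos hmV']
        exact follows_concat.mpr ⟨inv.fg, fun _ => rfl⟩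
      · rw [filter_concat, if_pos hmV', picked_concat, if_neg (by rw [hag]; decide),
          picked_concat, if_neg (by rw [hmh]; decide), inv.pRg]
      · rw [filter_concat, if_pos hmV', picked_concat, if_pos hag,
          picked_concat, if_pos hmh, Finset.insert_inter_of_mem hmV', inv.pLg]
      · rw [if_neg (by simp; omega)]
        refine ⟨hfR, Or.inl ?_⟩
        rw [filter_concat, if_pos hmV', List.length_append, List.length_singleton]
        omega

end UnionLemmas4

section Build

variable {G G' : Game} {τ σ1 σ2 σ3 : Strategy}

lemma buildPlay (ctx : Ctx G G' σ1 σ2 σ3) (hτ : Legal (gunion G G') .L .R τ) :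
    ∃ h, ValidHist (gunion G G') .L h ∧ Follows .L .R τ h ∧ Complete (gunion G G') .L h ∧
      fills (gunion G G').EL (picked .L .L h) := by
  suffices key : ∀ n (h f : List ℕ) (sG : Player) (d : Option ℕ),
      (gunion G G').V.card - h.length ≤ n → Inv G G' τ σ1 σ2 σ3 h f sG d →
      ∃ h', ValidHist (gunion G G') .L h' ∧ Follows .L .R τ h' ∧
        Complete (gunion G G') .L h' ∧ fills (gunion G G').EL (picked .L .L h') by
    refine key (gunion G G').V.card [] [] .R none (by simp) ?_
    refine ⟨valid_nil _ _, follows_nil _ _ _, valid_nil _ _, follows_nil _ _ _,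
      ?_, ?_, ?_, ?_, ?_, ?_, ?_, ?_, ?_⟩
    · simp [picked_nil]
    · simp [picked_nil]
    · intro z hz; cases hz
    · intro hc; exact absurd rfl hc
    · simp only [List.filter_nil]; exact valid_nil _ _
    · simp only [List.filter_nil]; exact follows_nil _ _ _
    · simp [picked_nil]
    · simp [picked_nil]
    · simp [mover_zero]
  intro n
  induction n with
  | zero =>
    intro h f sG d hn inv
    have hfull : h.length = (gunion G G').V.card := by
      have := length_le_card inv.vh; omega
    exact ⟨h, inv.vh, inv.fh, Or.inr hfull, final_lemma ctx inv (Or.inr hfull)⟩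
  | succ n ih =>
    intro h f sG d hn inv
    by_cases hend : ended (gunion G G') .L h
    · exact ⟨h, inv.vh, inv.fh, Or.inl hend, final_lemma ctx inv (Or.inl hend)⟩
    by_cases hfull : h.length = (gunion G G').V.card
    · exact ⟨h, inv.vh, inv.fh, Or.inr hfull, final_lemma ctx inv (Or.inr hfull)⟩
    have hlt : h.length < (gunion G G').V.card :=
      lt_of_le_of_ne (length_le_card inv.vh) hfull
    rcases Nat.mod_two_eq_zero_or_one h.length with hp | hp
    · obtain ⟨x, f', sG', d', inv'⟩ := stepL ctx inv hp hend hlt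
      exact ih (h ++ [x]) f' sG' d' (by simp; omega) inv'
    · obtain ⟨x, f', d', inv'⟩ := stepR ctx hτ inv hp hend hlt
      exact ih (h ++ [x]) f' sG d' (by simp; omega) inv'

end Build

/-- If `o(G) = L` and `o(G') = R⁻`, then Left has a winning strategy on `G ∪ G'`
as first player, i.e. `o(G ∪ G') ∈ {L, L⁻, N}`. -/
theorem union_L_Rminus (G G' : Game) (hG : WellFormed G) (hG' : WellFormed G')
    (hdisj : Disjoint G.V G'.V)
    (hGo : hasOutcome G oL) (hG'o : hasOutcome G' oRminus) :
    WinsAs (gunion G G') .L .L ∧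
      ∃ o : Outcome, hasOutcome (gunion G G') o ∧ (o = oL ∨ o = oLminus ∨ o = oN) := by
  obtain ⟨σ1, hσ1L, hσ1W⟩ : WinsAs G .L .L := hGo.1
  obtain ⟨σ2, hσ2L, hσ2W⟩ : WinsAs G .R .L := hGo.2
  obtain ⟨σ3, hσ3L, hσ3N⟩ : NonLosingAs G' .L .L :=
    (hG'o.1 : NonLosingAs G' .L .L ∧ NonLosingAs G' .L .R).1
  have wfU : WellFormed (gunion G G') := by
    refine ⟨fun e he => ?_, fun e he => ?_⟩
    · rcases Finset.mem_union.mp he with h1 | h1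
      · exact ⟨(hG.1 e h1).1.trans Finset.subset_union_left, (hG.1 e h1).2⟩
      · exact ⟨(hG'.1 e h1).1.trans Finset.subset_union_right, (hG'.1 e h1).2⟩
    · rcases Finset.mem_union.mp he with h1 | h1
      · exact ⟨(hG.2 e h1).1.trans Finset.subset_union_left, (hG.2 e h1).2⟩
      · exact ⟨(hG'.2 e h1).1.trans Finset.subset_union_right, (hG'.2 e h1).2⟩
  have ctx : Ctx G G' σ1 σ2 σ3 := by
    refine ⟨hG, hG', hdisj, fun sG => ?_, fun sG h hv hf hc => ?_, hσ3L,
      fun h hv hf hc => hσ3N h hv hf hc⟩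
    · cases sG
      · exact hσ1L
      · exact hσ2L
    · cases sG
      · exact hσ1W h hv hf hc
      · exact hσ2W h hv hf hc
  obtain ⟨r1, hr1⟩ := zermelo (gunion G G') .L wfU
  have hWin : WinsAs (gunion G G') .L .L := by
    cases r1 with
    | Lwin => exact hr1
    | draw =>
      exfalso
      obtain ⟨τ, hτL, hτP⟩ : NonLosingAs (gunion G G') .L .R := hr1.2
      obtain ⟨h, hv, hf, hc, hfill⟩ := buildPlay ctx hτL
      exact hτP h hv hf hc hfill
    | Rwin =>
      exfalso
      obtain ⟨τ, hτL, hτP⟩ : WinsAs (gunion G G') .L .R := hr1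
      obtain ⟨h, hv, hf, hc, hfill⟩ := buildPlay ctx hτL
      exact not_both_fills wfU hv hfill (hτP h hv hf hc)
  obtain ⟨r2, hr2⟩ := zermelo (gunion G G') .R wfU
  refine ⟨hWin, (.Lwin, r2), ⟨hWin, hr2⟩, ?_⟩
  cases r2 with
  | Lwin => exact Or.inl rfl
  | draw => exact Or.inr (Or.inl rfl)
  | Rwin => exact Or.inr (Or.inr rfl)
end APG
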